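/- For 0 < α < 2 define r_α : [0,∞) → ℝ by r_α(t) := (1/2)( e^{αt/2} + e^{−αt/2} − (e^{t/2} − e^{−t/2})^α ). Then r_α is strictly decreasing on (0,∞); indeed r_α'(t) < 0 for every t > 0. -/

import Mathlib

open Real

/-- Shao's covariance function `r_α`. -/
noncomputable def shaoCov (α t : ℝ) : ℝ :=
  (1 / 2) * (Real.exp (α * t / 2) + Real.exp (-(α * t) / 2)
    - (Real.exp (t / 2) - Real.exp (-t / 2)) ^ α)

/-- The auxiliary function `G` appearing in the exponent-monotonicity argument. -/
private lemma aux_G_strictMono {L M : ℝ} (hL : 0 < L) (hML : M < L) :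
    StrictMonoOn (fun a : ℝ => (Real.exp (a * L) - 1) * Real.exp ((1 - a) * M))
      (Set.Icc (0 : ℝ) 2) := by
  have hderiv : ∀ a : ℝ, HasDerivAt
      (fun a : ℝ => (Real.exp (a * L) - 1) * Real.exp ((1 - a) * M))
      (Real.exp ((1 - a) * M) * (L * Real.exp (a * L) - M * (Real.exp (a * L) - 1))) a := by
    intro a
    have h1 : HasDerivAt (fun a : ℝ => Real.exp (a * L) - 1)
        (Real.exp (a * L) * L) a := by
      simpa using (((hasDerivAt_id a).mul_const L).exp).sub_const 1
    have h2 : HasDerivAt (fun a : ℝ => Real.exp ((1 - a) * M))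
        (Real.exp ((1 - a) * M) * (-M)) a := by
      have : HasDerivAt (fun a : ℝ => (1 - a) * M) (-M) a := by
        simpa using ((hasDerivAt_const a (1:ℝ)).sub (hasDerivAt_id a)).mul_const M
      simpa using this.exp
    have := h1.mul h2
    exact this.congr_deriv (by ring)
  apply strictMonoOn_of_deriv_pos (convex_Icc 0 2)
  · exact fun a _ => ((hderiv a).differentiableAt).continuousAt.continuousWithinAt
  · intro a ha
    rw [interior_Icc] at ha
    rw [(hderiv a).deriv]
    have hea : (1 : ℝ) < Real.exp (a * L) := by
      rw [← Real.exp_zero, Real.exp_lt_exp]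
      exact mul_pos ha.1 hL
    have hbracket : 0 < L * Real.exp (a * L) - M * (Real.exp (a * L) - 1) := by
      rcases le_or_gt M 0 with hM | hM
      · have : M * (Real.exp (a * L) - 1) ≤ 0 :=
          mul_nonpos_of_nonpos_of_nonneg hM (by linarith)
        nlinarith [Real.exp_pos (a * L)]
      · have h1 : M * (Real.exp (a * L) - 1) < M * Real.exp (a * L) := by
          nlinarith
        have h2 : M * Real.exp (a * L) < L * Real.exp (a * L) := by
          exact mul_lt_mul_of_pos_right hML (Real.exp_pos _)
        linarith
    exact mul_pos (Real.exp_pos _) hbracket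

/-- The key inequality: for `x > 1` and `0 < α < 2`,
`(x^α - 1)(x-1)^{1-α} < x + 1`. -/
private lemma key_ineq {x α : ℝ} (hx : 1 < x) (h0 : 0 < α) (h2 : α < 2) :
    (x ^ α - 1) * (x - 1) ^ (1 - α) < x + 1 := by
  set L := Real.log x with hLdef
  set M := Real.log (x - 1) with hMdef
  have hxpos : (0:ℝ) < x := by linarith
  have hx1pos : (0:ℝ) < x - 1 := by linarith
  have hL : 0 < L := Real.log_pos hx
  have hML : M < L := Real.log_lt_log hx1pos (by linarith)
  have hmono := aux_G_strictMono hL hML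
  have hlt := hmono (Set.mem_Icc.mpr ⟨le_of_lt h0, le_of_lt h2⟩)
      (Set.mem_Icc.mpr ⟨by norm_num, le_refl 2⟩) h2
  have e1 : Real.exp (α * L) = x ^ α := by
    rw [mul_comm, Real.exp_mul, Real.exp_log hxpos]
  have e2 : Real.exp ((1 - α) * M) = (x - 1) ^ (1 - α) := by
    rw [mul_comm, Real.exp_mul, Real.exp_log hx1pos]
  have e3 : Real.exp ((2:ℝ) * L) = x * x := by
    rw [two_mul, Real.exp_add, Real.exp_log hxpos]
  have e4 : Real.exp ((1 - (2:ℝ)) * M) = (x - 1)⁻¹ := by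
    norm_num
    rw [Real.exp_neg, Real.exp_log hx1pos]
  simp only [e1, e2, e3, e4] at hlt
  have hxx : (x * x - 1) * (x - 1)⁻¹ = x + 1 := by
    field_simp
    ring
  linarith [hlt, hxx]

/-- The derivative inequality in exponential form. -/
private lemma exp_ineq {α t : ℝ} (h0 : 0 < α) (h2 : α < 2) (ht : 0 < t) :
    Real.exp (α * t / 2) - Real.exp (-(α * t) / 2)
      < (Real.exp (t / 2) + Real.exp (-t / 2))
        * (Real.exp (t / 2) - Real.exp (-t / 2)) ^ (α - 1) := by
  set x := Real.exp t with hxdef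
  have hx : 1 < x := by
    rw [hxdef, ← Real.exp_zero]
    exact Real.exp_lt_exp.mpr ht
  have hx1pos : (0:ℝ) < x - 1 := by linarith
  -- from key_ineq: x^α - 1 < (x+1)*(x-1)^(α-1)
  have hkey : x ^ α - 1 < (x + 1) * (x - 1) ^ (α - 1) := by
    have h := key_ineq hx h0 h2
    have hpow : (0:ℝ) < (x - 1) ^ (α - 1) := Real.rpow_pos_of_pos hx1pos _
    have := mul_lt_mul_of_pos_right h hpow
    have hcancel : (x - 1) ^ (1 - α) * (x - 1) ^ (α - 1) = 1 := by
      rw [← Real.rpow_add hx1pos]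
      norm_num
    calc x ^ α - 1 = (x ^ α - 1) * ((x - 1) ^ (1 - α) * (x - 1) ^ (α - 1)) := by
          rw [hcancel]; ring
      _ = (x ^ α - 1) * (x - 1) ^ (1 - α) * (x - 1) ^ (α - 1) := by ring
      _ < (x + 1) * (x - 1) ^ (α - 1) := this
  -- now translate
  have hu : Real.exp (t / 2) * Real.exp (t / 2) = x := by
    rw [← Real.exp_add, hxdef]; ring_nf
  have huinv : Real.exp (-t / 2) = (Real.exp (t / 2))⁻¹ := by
    rw [← Real.exp_neg]; ring_nf
  have hupos : (0:ℝ) < Real.exp (t / 2) := Real.exp_pos _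
  -- e^{t/2} - e^{-t/2} = (x - 1) * e^{-t/2}
  have hg : Real.exp (t / 2) - Real.exp (-t / 2) = (x - 1) * Real.exp (-t / 2) := by
    rw [huinv]
    field_simp
    linarith [hu]
  -- e^{t/2} + e^{-t/2} = (x + 1) * e^{-t/2}
  have hgp : Real.exp (t / 2) + Real.exp (-t / 2) = (x + 1) * Real.exp (-t / 2) := by
    rw [huinv]
    field_simp
    linarith [hu]
  -- (e^{t/2} - e^{-t/2})^(α-1) = (x-1)^(α-1) * exp(-t/2*(α-1))
  have hgpow : (Real.exp (t / 2) - Real.exp (-t / 2)) ^ (α - 1)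
      = (x - 1) ^ (α - 1) * Real.exp (-t / 2 * (α - 1)) := by
    rw [hg, Real.mul_rpow (le_of_lt hx1pos) (le_of_lt (Real.exp_pos _)), Real.exp_mul]
  -- e^{αt/2} = x^α * stuff : x^α = exp (t*α)
  have hxα : x ^ α = Real.exp (t * α) := by
    rw [hxdef, ← Real.exp_mul]
  -- LHS = (x^α - 1) * exp(-(α*t)/2)
  have hlhs : Real.exp (α * t / 2) - Real.exp (-(α * t) / 2)
      = (x ^ α - 1) * Real.exp (-(α * t) / 2) := by
    rw [hxα, sub_mul, one_mul, ← Real.exp_add]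
    ring_nf
  have hrhs : (Real.exp (t / 2) + Real.exp (-t / 2))
      * (Real.exp (t / 2) - Real.exp (-t / 2)) ^ (α - 1)
      = (x + 1) * (x - 1) ^ (α - 1) * Real.exp (-(α * t) / 2) := by
    rw [hgp, hgpow]
    have : Real.exp (-t / 2) * Real.exp (-t / 2 * (α - 1)) = Real.exp (-(α * t) / 2) := by
      rw [← Real.exp_add]; ring_nf
    calc (x + 1) * Real.exp (-t / 2) * ((x - 1) ^ (α - 1) * Real.exp (-t / 2 * (α - 1)))
        = (x + 1) * (x - 1) ^ (α - 1)
            * (Real.exp (-t / 2) * Real.exp (-t / 2 * (α - 1))) := by ring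
      _ = (x + 1) * (x - 1) ^ (α - 1) * Real.exp (-(α * t) / 2) := by rw [this]
  rw [hlhs, hrhs]
  exact mul_lt_mul_of_pos_right hkey (Real.exp_pos _)

private lemma shao_hasDerivAt {α t : ℝ} (h0 : 0 < α) (ht : 0 < t) :
    HasDerivAt (shaoCov α)
      ((1/2) * (Real.exp (α * t / 2) * (α * 1 / 2) + Real.exp (-(α * t) / 2) * (-(α * 1) / 2)
        - (Real.exp (t / 2) * (1 / 2) - Real.exp (-t / 2) * (-1 / 2)) * α
          * (Real.exp (t / 2) - Real.exp (-t / 2)) ^ (α - 1))) t := by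
  have hid := hasDerivAt_id t
  have h1 : HasDerivAt (fun s : ℝ => Real.exp (α * s / 2))
      (Real.exp (α * t / 2) * (α * 1 / 2)) t :=
    ((hid.const_mul α).div_const 2).exp
  have h2 : HasDerivAt (fun s : ℝ => Real.exp (-(α * s) / 2))
      (Real.exp (-(α * t) / 2) * (-(α * 1) / 2)) t :=
    (((hid.const_mul α).neg).div_const 2).exp
  have ha : HasDerivAt (fun s : ℝ => Real.exp (s / 2)) (Real.exp (t / 2) * (1 / 2)) t :=
    (hid.div_const 2).exp
  have hb : HasDerivAt (fun s : ℝ => Real.exp (-s / 2)) (Real.exp (-t / 2) * (-1 / 2)) t :=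
    ((hid.neg).div_const 2).exp
  have hgpos : (0:ℝ) < Real.exp (t / 2) - Real.exp (-t / 2) := by
    have : Real.exp (-t / 2) < Real.exp (t / 2) := Real.exp_lt_exp.mpr (by linarith)
    linarith
  have h3 : HasDerivAt (fun s : ℝ => (Real.exp (s / 2) - Real.exp (-s / 2)) ^ α)
      ((Real.exp (t / 2) * (1 / 2) - Real.exp (-t / 2) * (-1 / 2)) * α
        * (Real.exp (t / 2) - Real.exp (-t / 2)) ^ (α - 1)) t :=
    (ha.sub hb).rpow_const (Or.inl (ne_of_gt hgpos))
  exact ((h1.add h2).sub h3).const_mul ((1:ℝ)/2)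

private lemma shao_deriv_neg {α : ℝ} (hα0 : 0 < α) (hα2 : α < 2)
    {t : ℝ} (ht : 0 < t) : deriv (shaoCov α) t < 0 := by
  rw [(shao_hasDerivAt hα0 ht).deriv]
  have hkey := exp_ineq hα0 hα2 ht
  have hpow : (0:ℝ) < (Real.exp (t / 2) - Real.exp (-t / 2)) ^ (α - 1) := by
    apply Real.rpow_pos_of_pos
    have : Real.exp (-t / 2) < Real.exp (t / 2) := Real.exp_lt_exp.mpr (by linarith)
    linarith
  have heq : (1/2 : ℝ) * (Real.exp (α * t / 2) * (α * 1 / 2) + Real.exp (-(α * t) / 2) * (-(α * 1) / 2)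
        - (Real.exp (t / 2) * (1 / 2) - Real.exp (-t / 2) * (-1 / 2)) * α
          * (Real.exp (t / 2) - Real.exp (-t / 2)) ^ (α - 1))
      = (α / 4) * ((Real.exp (α * t / 2) - Real.exp (-(α * t) / 2))
          - (Real.exp (t / 2) + Real.exp (-t / 2))
            * (Real.exp (t / 2) - Real.exp (-t / 2)) ^ (α - 1)) := by
    ring
  rw [heq]
  apply mul_neg_of_pos_of_neg (by linarith)
  linarith

/-- For `0 < α < 2`, Shao's covariance function is strictly decreasing on `(0, ∞)`,
and indeed has strictly negative derivative at every `t > 0`. -/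
theorem shaoCov_strictAnti {α : ℝ} (hα0 : 0 < α) (hα2 : α < 2) :
    StrictAntiOn (shaoCov α) (Set.Ioi (0 : ℝ)) ∧
      ∀ t : ℝ, 0 < t → deriv (shaoCov α) t < 0 := by
  constructor
  · apply strictAntiOn_of_deriv_neg (convex_Ioi 0)
    · exact fun t ht =>
        ((shao_hasDerivAt hα0 ht).differentiableAt).continuousAt.continuousWithinAt
    · intro t ht
      rw [interior_Ioi] at ht
      exact shao_deriv_neg hα0 hα2 ht
  · exact fun t ht => shao_deriv_neg hα0 hα2 ht
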